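/- arXiv:1910.06226 — 2 statements merged into one kernel-verified Lean document; each statement's English description precedes it below -/
import Mathlib

section
/- Let T = a_1a_2...a_s be a square-free word over the alphabet {1,2,3}, and let V_1, V_2, V_3 be three pairwise disjoint alphabets. Then any word of the form W = W_1W_2...W_s, where each W_i is a nonempty word over the alphabet V_{a_i} whose letters are pairwise distinct, is square-free. -/
namespace SubstAux
variable {α : Type*}

/-- starting position of block `t` inside the flattened word -/
def start (Ws : List (List α)) (t : ℕ) : ℕ := ((Ws.take t).map List.length).sum

lemma start_zero (Ws : List (List α)) : start Ws 0 = 0 := rfl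

lemma start_succ (Ws : List (List α)) {t : ℕ} (h : t < Ws.length) :
    start Ws (t + 1) = start Ws t + (Ws[t]'h).length := by
  unfold start
  rw [List.take_succ, List.map_append, List.sum_append, List.getElem?_eq_getElem h]
  simp

lemma start_le_succ (Ws : List (List α)) (t : ℕ) :
    start Ws t ≤ start Ws (t + 1) := by
  simp [start, List.take_succ]

lemma start_mono (Ws : List (List α)) {t t' : ℕ} (h : t ≤ t') :
    start Ws t ≤ start Ws t' := by
  induction t', h using Nat.le_induction with
  | base => exact le_rfl
  | succ n hn ih => exact ih.trans (start_le_succ Ws n)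

lemma start_length (Ws : List (List α)) :
    start Ws Ws.length = Ws.flatten.length := by
  simp [start, List.length_flatten]

lemma start_stable (Ws : List (List α)) {t : ℕ} (h : Ws.length ≤ t) :
    start Ws t = Ws.flatten.length := by
  rw [start, List.take_of_length_le h, ← List.length_flatten]

lemma start_lt_succ (Ws : List (List α)) (hne : ∀ (t : ℕ) (h : t < Ws.length), Ws[t] ≠ [])
    {t : ℕ} (h : t < Ws.length) : start Ws t < start Ws (t + 1) := by
  rw [start_succ Ws h]
  have := hne t h
  have : 0 < (Ws[t]'h).length := List.length_pos_iff.mpr this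
  omega

lemma start_strict (Ws : List (List α)) (hne : ∀ (t : ℕ) (h : t < Ws.length), Ws[t] ≠ [])
    {t t' : ℕ} (h : t < t') (h' : t' ≤ Ws.length) : start Ws t < start Ws t' := by
  have h1 : start Ws t < start Ws (t+1) := start_lt_succ Ws hne (by omega)
  exact h1.trans_le (start_mono Ws (by omega))

lemma getElem_flatten (Ws : List (List α)) {t r : ℕ} (ht : t < Ws.length)
    (hr : r < (Ws[t]'ht).length) (hk : start Ws t + r < Ws.flatten.length) :
    Ws.flatten[start Ws t + r] = (Ws[t]'ht)[r] := by
  have hdecomp : Ws.flatten = (Ws.take t).flatten ++ ((Ws[t]'ht) ++ (Ws.drop (t+1)).flatten) := by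
    conv_lhs => rw [← List.take_append_drop t Ws, ← List.getElem_cons_drop ht]
    rw [List.flatten_append, List.flatten_cons]
  have hlen : ((Ws.take t).flatten).length = start Ws t := by
    simp [start, List.length_flatten]
  rw [List.getElem_of_eq hdecomp]
  rw [List.getElem_append_right (by omega)]
  rw [List.getElem_append_left (by omega)]
  congr 1
  omega

/-- index of the block containing position `k` -/
def bIdx (Ws : List (List α)) (k : ℕ) : ℕ :=
  Nat.findGreatest (fun t => start Ws t ≤ k) Ws.length

lemma bIdx_le (Ws : List (List α)) (k : ℕ) : bIdx Ws k ≤ Ws.length :=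
  Nat.findGreatest_le _

lemma start_bIdx_le (Ws : List (List α)) (k : ℕ) : start Ws (bIdx Ws k) ≤ k :=
  Nat.findGreatest_spec (P := fun t => start Ws t ≤ k) (Nat.zero_le _) (by simp [start_zero])

lemma le_bIdx (Ws : List (List α)) {k t : ℕ} (ht : t ≤ Ws.length)
    (h : start Ws t ≤ k) : t ≤ bIdx Ws k :=
  Nat.le_findGreatest ht h

lemma lt_start_succ_bIdx (Ws : List (List α)) {k : ℕ} (hk : k < Ws.flatten.length) :
    k < start Ws (bIdx Ws k + 1) := by
  by_cases h : bIdx Ws k + 1 ≤ Ws.length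
  · by_contra hc
    push_neg at hc
    exact Nat.findGreatest_is_greatest (P := fun t => start Ws t ≤ k)
      (Nat.lt_succ_self _) h hc
  · rw [start_stable Ws (by omega)]; exact hk

lemma bIdx_lt_length (Ws : List (List α)) {k : ℕ} (hk : k < Ws.flatten.length) :
    bIdx Ws k < Ws.length := by
  have h1 := start_bIdx_le Ws k
  have h2 := bIdx_le Ws k
  rcases Nat.lt_or_ge (bIdx Ws k) Ws.length with h | h
  · exact h
  · have : bIdx Ws k = Ws.length := by omega
    rw [this, start_length] at h1; omega

lemma bIdx_mono (Ws : List (List α)) {k k' : ℕ} (h : k ≤ k') :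
    bIdx Ws k ≤ bIdx Ws k' :=
  le_bIdx Ws (bIdx_le Ws k) ((start_bIdx_le Ws k).trans h)

lemma bIdx_succ_le (Ws : List (List α)) (hne : ∀ (t : ℕ) (h : t < Ws.length), Ws[t] ≠ [])
    {k : ℕ} (hk : k < Ws.flatten.length) :
    bIdx Ws (k + 1) ≤ bIdx Ws k + 1 := by
  by_contra hc
  push_neg at hc
  have h1 : bIdx Ws k + 2 ≤ Ws.length := by
    have := bIdx_le Ws (k+1); omega
  have h2 : start Ws (bIdx Ws k + 2) ≤ start Ws (bIdx Ws (k+1)) := start_mono Ws (by omega)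
  have h3 := start_bIdx_le Ws (k+1)
  have h4 := lt_start_succ_bIdx Ws hk
  have h5 : start Ws (bIdx Ws k + 1) < start Ws (bIdx Ws k + 2) :=
    start_lt_succ Ws hne (by omega)
  omega

lemma bIdx_start (Ws : List (List α)) (hne : ∀ (t : ℕ) (h : t < Ws.length), Ws[t] ≠ [])
    {t : ℕ} (ht : t < Ws.length) : bIdx Ws (start Ws t) = t := by
  have h1 : t ≤ bIdx Ws (start Ws t) := le_bIdx Ws (by omega) le_rfl
  have h2 : bIdx Ws (start Ws t) ≤ t := by
    by_contra hc
    push_neg at hc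
    have h3 : start Ws (bIdx Ws (start Ws t)) ≤ start Ws t := start_bIdx_le Ws _
    have h4 : start Ws t < start Ws (bIdx Ws (start Ws t)) :=
      start_strict Ws hne hc (bIdx_le Ws _)
    omega
  omega

lemma getElem_flatten_bIdx (Ws : List (List α)) {k : ℕ} (hk : k < Ws.flatten.length) :
    ∃ (h1 : bIdx Ws k < Ws.length) (h2 : k - start Ws (bIdx Ws k) < (Ws[bIdx Ws k]'h1).length),
      Ws.flatten[k] = (Ws[bIdx Ws k]'h1)[k - start Ws (bIdx Ws k)] := by
  have h1 := bIdx_lt_length Ws hk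
  have h2 := start_bIdx_le Ws k
  have h3 := lt_start_succ_bIdx Ws hk
  rw [start_succ Ws h1] at h3
  refine ⟨h1, by omega, ?_⟩
  have := getElem_flatten Ws h1 (r := k - start Ws (bIdx Ws k)) (by omega) (by omega)
  rw [← this]
  congr 1
  omega

lemma gidx {β : Type*} {l : List β} {a b : ℕ} (ha : a < l.length) (hb : b < l.length)
    (h : a = b) : l[a] = l[b] := by subst h; rfl

end SubstAux


def SquareFree {α : Type*} (w : List α) : Prop :=
  ∀ x : List α, x ≠ [] → ¬ (x ++ x) <:+: w

open SubstAux in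
/-- If `T = a₁a₂…a_s` is a square-free word over the alphabet `{1,2,3}`
(represented by `Fin 3`) and `V 1, V 2, V 3` are pairwise disjoint
alphabets, then every word `W = W₁W₂…W_s`, where each `Wᵢ` is a nonempty
word over the alphabet `V aᵢ` with pairwise distinct letters, is
square-free. -/
theorem substitution_lemma {α : Type*} (V : Fin 3 → Set α)
    (hdisj : ∀ i j : Fin 3, i ≠ j → Disjoint (V i) (V j))
    (T : List (Fin 3)) (hT : SquareFree T)
    (Ws : List (List α)) (hlen : Ws.length = T.length)
    (hW : ∀ (i : ℕ) (hi : i < T.length),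
      Ws[i]'(by omega) ≠ [] ∧
      (∀ x ∈ Ws[i]'(by omega), x ∈ V (T[i]'hi)) ∧
      (Ws[i]'(by omega)).Nodup) :
    SquareFree Ws.flatten := by
  intro x hx hinf
  obtain ⟨P, S, hPS⟩ := hinf
  have hmpos : 0 < x.length := List.length_pos_iff.mpr hx
  have hlen2 : P.length + 2*x.length + S.length = Ws.flatten.length := by
    have := congrArg List.length hPS
    simp only [List.length_append] at this
    omega
  have hne : ∀ (t : ℕ) (h : t < Ws.length), Ws[t] ≠ [] := fun t h => (hW t (by omega)).1
  have hxxlen : (x ++ x).length = 2*x.length := by simp; omega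
  -- corresponding letters of the two halves of the square are equal
  have heq : ∀ (k : ℕ) (h1 : P.length ≤ k) (h2 : k < P.length + x.length),
      Ws.flatten[k]'(by omega) = Ws.flatten[k + x.length]'(by omega) := by
    intro k h1 h2
    have e1 : Ws.flatten[k]'(by omega) = (x ++ x)[k - P.length]'(by omega) := by
      rw [List.getElem_of_eq hPS.symm, List.getElem_append_left (h := by simp; omega),
          List.getElem_append_right (by omega)]
    have e2 : Ws.flatten[k + x.length]'(by omega)
        = (x ++ x)[k + x.length - P.length]'(by omega) := by
      rw [List.getElem_of_eq hPS.symm, List.getElem_append_left (h := by simp; omega),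
          List.getElem_append_right (by omega)]
    have e3 : (x ++ x)[k - P.length]'(by omega) = x[k - P.length]'(by omega) :=
      List.getElem_append_left (by omega)
    have e4 : (x ++ x)[k + x.length - P.length]'(by omega) = x[k - P.length]'(by omega) := by
      rw [List.getElem_append_right (by omega)]
      exact gidx (by omega) (by omega) (by omega)
    rw [e1, e2, e3, e4]
  -- each letter lies in the alphabet of its block
  have hblt : ∀ (k : ℕ), k < Ws.flatten.length → bIdx Ws k < T.length := by
    intro k hk
    have := bIdx_lt_length Ws hk
    omega
  have hVmem : ∀ (k : ℕ) (hk : k < Ws.flatten.length),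
      Ws.flatten[k] ∈ V (T.getD (bIdx Ws k) 0) := by
    intro k hk
    obtain ⟨h1, h2, h3⟩ := getElem_flatten_bIdx Ws hk
    rw [h3, List.getD_eq_getElem _ _ (hblt k hk)]
    exact (hW (bIdx Ws k) (by omega)).2.1 _ (List.getElem_mem _)
  -- corresponding blocks carry the same letter of T
  have hTeq : ∀ (k : ℕ), P.length ≤ k → k < P.length + x.length →
      T.getD (bIdx Ws k) 0 = T.getD (bIdx Ws (k + x.length)) 0 := by
    intro k h1 h2
    by_contra hcne
    have m1 := hVmem k (by omega)
    have m2 := hVmem (k + x.length) (by omega)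
    rw [heq k h1 h2] at m1
    exact Set.disjoint_left.mp (hdisj _ _ hcne) m1 m2
  -- T has no two adjacent equal letters
  have hadj : ∀ (t : ℕ), t + 1 < T.length → T.getD t 0 ≠ T.getD (t+1) 0 := by
    intro t ht hc
    rw [List.getD_eq_getElem _ _ (by omega), List.getD_eq_getElem _ _ ht] at hc
    refine hT [T[t+1]] (by simp) ⟨T.take t, T.drop (t+2), ?_⟩
    have e1 : T[t+1] :: T.drop (t+2) = T.drop (t+1) := List.getElem_cons_drop ht
    have e2 : (T[t]'(by omega)) :: T.drop (t+1) = T.drop t := List.getElem_cons_drop (by omega)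
    rw [hc] at e2
    calc T.take t ++ ([T[t+1]] ++ [T[t+1]]) ++ T.drop (t+2)
        = T.take t ++ (T[t+1] :: (T[t+1] :: T.drop (t+2))) := by simp
      _ = T := by rw [e1, e2, List.take_append_drop]
  obtain ⟨d, hdi⟩ : ∃ d, bIdx Ws (P.length + x.length) = bIdx Ws P.length + d := by
    have := bIdx_mono Ws (show P.length ≤ P.length + x.length by omega)
    exact ⟨bIdx Ws (P.length + x.length) - bIdx Ws P.length, by omega⟩
  -- the shift in block index is constant along the square
  have hconst : ∀ (q : ℕ), q < x.length →
      bIdx Ws (P.length + x.length + q) = bIdx Ws (P.length + q) + d := by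
    intro q
    induction q with
    | zero => intro _; simpa using hdi
    | succ q ih =>
      intro hq
      show bIdx Ws (P.length + x.length + q + 1) = bIdx Ws (P.length + q + 1) + d
      have ih' := ih (by omega)
      have ha12 : bIdx Ws (P.length + q) ≤ bIdx Ws (P.length + q + 1) := bIdx_mono Ws (by omega)
      have ha21 : bIdx Ws (P.length + q + 1) ≤ bIdx Ws (P.length + q) + 1 :=
        bIdx_succ_le Ws hne (by omega)
      have hc12 : bIdx Ws (P.length + x.length + q) ≤ bIdx Ws (P.length + x.length + q + 1) :=
        bIdx_mono Ws (by omega)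
      have hc21 : bIdx Ws (P.length + x.length + q + 1) ≤ bIdx Ws (P.length + x.length + q) + 1 :=
        bIdx_succ_le Ws hne (by omega)
      have ht1 := hTeq (P.length + q) (by omega) (by omega)
      have ht2 := hTeq (P.length + q + 1) (by omega) (by omega)
      rw [show P.length + q + x.length = P.length + x.length + q from by omega] at ht1
      rw [show P.length + q + 1 + x.length = P.length + x.length + q + 1 from by omega] at ht2
      rcases show bIdx Ws (P.length + q + 1) = bIdx Ws (P.length + q) ∨
          bIdx Ws (P.length + q + 1) = bIdx Ws (P.length + q) + 1 from by omega with hA | hA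
      · rcases show bIdx Ws (P.length + x.length + q + 1) = bIdx Ws (P.length + x.length + q) ∨
            bIdx Ws (P.length + x.length + q + 1) = bIdx Ws (P.length + x.length + q) + 1
            from by omega with hC | hC
        · omega
        · -- a stays, c jumps : adjacent equal letters in T
          exfalso
          rw [hA, hC] at ht2
          have hb : bIdx Ws (P.length + x.length + q) + 1 < T.length := by
            have := hblt (P.length + x.length + q + 1) (by omega)
            omega
          exact hadj _ hb (ht1.symm.trans ht2)
      · rcases show bIdx Ws (P.length + x.length + q + 1) = bIdx Ws (P.length + x.length + q) ∨
            bIdx Ws (P.length + x.length + q + 1) = bIdx Ws (P.length + x.length + q) + 1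
            from by omega with hC | hC
        · -- a jumps, c stays : adjacent equal letters in T
          exfalso
          rw [hA, hC] at ht2
          have hb : bIdx Ws (P.length + q) + 1 < T.length := by
            have := hblt (P.length + q + 1) (by omega)
            omega
          exact hadj _ hb (ht1.trans ht2.symm)
        · omega
  rcases Nat.eq_zero_or_pos d with hd0 | hdpos
  · -- the two copies of x start in the same block : contradicts Nodup
    have hbb : bIdx Ws (P.length + x.length) = bIdx Ws P.length := by omega
    obtain ⟨hb1, hr1, hg1⟩ := getElem_flatten_bIdx Ws (k := P.length) (by omega)
    have hsb := start_bIdx_le Ws P.length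
    have hlt2 : P.length + x.length < start Ws (bIdx Ws P.length + 1) := by
      have := lt_start_succ_bIdx Ws (k := P.length + x.length) (by omega)
      rw [hbb] at this
      exact this
    rw [start_succ Ws hb1] at hlt2
    have e2 : Ws.flatten[P.length + x.length]'(by omega)
        = (Ws[bIdx Ws P.length]'hb1)[P.length + x.length - start Ws (bIdx Ws P.length)]'(by omega) := by
      have := getElem_flatten Ws hb1 (r := P.length + x.length - start Ws (bIdx Ws P.length))
        (by omega) (by omega)
      rw [← this]
      exact gidx (by omega) (by omega) (by omega)
    have hL := heq P.length le_rfl (by omega)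
    rw [hg1, e2] at hL
    have hnd := (hW (bIdx Ws P.length) (by omega)).2.2
    have := hnd.getElem_inj_iff.mp hL
    omega
  · -- the block indices of T form a square : contradicts square-freeness of T
    have hsurj : ∀ (t : ℕ), bIdx Ws P.length ≤ t → t < bIdx Ws P.length + d →
        ∃ k, P.length ≤ k ∧ k < P.length + x.length ∧ bIdx Ws k = t := by
      intro t h1 h2
      rcases eq_or_lt_of_le h1 with rfl | hlt
      · exact ⟨P.length, le_rfl, by omega, rfl⟩
      · have hblt2 : bIdx Ws (P.length + x.length) < Ws.length :=
          bIdx_lt_length Ws (by omega)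
        have htlt : t < Ws.length := by omega
        refine ⟨start Ws t, ?_, ?_, bIdx_start Ws hne htlt⟩
        · by_contra hcon
          push_neg at hcon
          have := le_bIdx Ws (show t ≤ Ws.length by omega) (le_of_lt hcon)
          omega
        · have hs1 : bIdx Ws (P.length + x.length) ≤ bIdx Ws (P.length + x.length - 1) + 1 := by
            have := bIdx_succ_le Ws hne (k := P.length + x.length - 1) (by omega)
            rw [show P.length + x.length - 1 + 1 = P.length + x.length from by omega] at this
            exact this
          have hs2 : start Ws t ≤ start Ws (bIdx Ws (P.length + x.length - 1)) :=
            start_mono Ws (by omega)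
          have hs3 := start_bIdx_le Ws (P.length + x.length - 1)
          omega
    have hTstep : ∀ (t : ℕ), bIdx Ws P.length ≤ t → t < bIdx Ws P.length + d →
        T.getD t 0 = T.getD (t + d) 0 := by
      intro t h1 h2
      obtain ⟨k, hk1, hk2, hk3⟩ := hsurj t h1 h2
      have hc := hconst (k - P.length) (by omega)
      rw [show P.length + x.length + (k - P.length) = k + x.length from by omega,
          show P.length + (k - P.length) = k from by omega, hk3] at hc
      have hte := hTeq k hk1 hk2
      rw [hk3, hc] at hte
      exact hte
    have hbound : bIdx Ws P.length + 2*d ≤ T.length := by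
      obtain ⟨k, hk1, hk2, hk3⟩ := hsurj (bIdx Ws P.length + d - 1) (by omega) (by omega)
      have hc := hconst (k - P.length) (by omega)
      rw [show P.length + x.length + (k - P.length) = k + x.length from by omega,
          show P.length + (k - P.length) = k from by omega, hk3] at hc
      have := hblt (k + x.length) (by omega)
      omega
    have hx'len : ((T.drop (bIdx Ws P.length)).take d).length = d := by simp; omega
    have hshift : (T.drop (bIdx Ws P.length)).take d = (T.drop (bIdx Ws P.length + d)).take d := by
      apply List.ext_getElem
      · simp; omega
      · intro u hu1 hu2
        rw [List.getElem_take, List.getElem_drop, List.getElem_take, List.getElem_drop]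
        have hu : u < d := by omega
        have hstep := hTstep (bIdx Ws P.length + u) (by omega) (by omega)
        have g1 : T.getD (bIdx Ws P.length + u) 0 = T[bIdx Ws P.length + u]'(by omega) :=
          List.getD_eq_getElem T 0 (by omega)
        have g2 : T.getD (bIdx Ws P.length + u + d) 0
            = T[bIdx Ws P.length + u + d]'(by omega) := List.getD_eq_getElem T 0 (by omega)
        rw [g1, g2] at hstep
        exact hstep.trans (gidx (by omega) (by omega) (by omega))
    have hsq : (T.drop (bIdx Ws P.length)).take d ++ (T.drop (bIdx Ws P.length)).take d = (T.drop (bIdx Ws P.length)).take (2*d) := by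
      rw [show 2*d = d + d from by omega, List.take_add, List.drop_drop, ← hshift]
    refine hT ((T.drop (bIdx Ws P.length)).take d) ?_ ?_
    · intro hcon
      rw [hcon] at hx'len
      simp at hx'len
      omega
    · rw [hsq]
      exact ((List.take_prefix _ _).isInfix).trans ((List.drop_suffix _ _).isInfix)
end

section
/- The word H = abcabacbcabcbabcabacbcabc over the alphabet {a,b,c} is square-free and extremal: no word obtained from H by inserting a single letter of {a,b,c} at any position is square-free. -/
/-- A square-free word is extremal if inserting a single letter at any
position never yields a square-free word. -/
def Extremal {α : Type*} (w : List α) : Prop :=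
  SquareFree w ∧ ∀ (w' w'' : List α) (x : α), w = w' ++ w'' →
    ¬ SquareFree (w' ++ x :: w'')

/-- The letter `a` of the 3-letter alphabet. -/
def a : Fin 3 := 0
/-- The letter `b` of the 3-letter alphabet. -/
def b : Fin 3 := 1
/-- The letter `c` of the 3-letter alphabet. -/
def c : Fin 3 := 2

/-- The word `H = abcabacbcabcbabcabacbcabc`. -/
def H : List (Fin 3) :=
  [a, b, c, a, b, a, c, b, c, a, b, c, b, a, b, c, a, b, a, c, b, c, a, b, c]


/-- `p` is a nonempty square. -/
def sqAt (p : List (Fin 3)) : Bool :=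
  decide (p ≠ []) && p.length % 2 == 0 &&
    decide (p.take (p.length / 2) = p.drop (p.length / 2))

lemma sqAt_iff (p : List (Fin 3)) :
    sqAt p = true ↔ ∃ x : List (Fin 3), x ≠ [] ∧ p = x ++ x := by
  constructor
  · intro h
    simp only [sqAt, Bool.and_eq_true, beq_iff_eq, decide_eq_true_eq] at h
    obtain ⟨⟨hne, hmod⟩, heq⟩ := h
    have hple : p.length ≠ 0 := fun h0 => hne (List.length_eq_zero_iff.mp h0)
    refine ⟨p.take (p.length / 2), ?_, ?_⟩
    · intro hx
      have hl := congrArg List.length hx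
      rw [List.length_take] at hl
      simp only [List.length_nil] at hl
      omega
    · conv_lhs => rw [← List.take_append_drop (p.length / 2) p]
      rw [heq]
  · rintro ⟨x, hx, rfl⟩
    have hlen : (x ++ x).length = 2 * x.length := by simp; omega
    have h2 : (x ++ x).length / 2 = x.length := by omega
    simp only [sqAt, Bool.and_eq_true, beq_iff_eq, decide_eq_true_eq]
    refine ⟨⟨by simp [hx], by omega⟩, ?_⟩
    rw [h2, List.take_left, List.drop_left]

/-- Boolean square-freeness check. -/
def sfB (w : List (Fin 3)) : Bool :=
  w.tails.all fun t => t.inits.all fun p => !sqAt p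

lemma sfB_iff (w : List (Fin 3)) : sfB w = true ↔ SquareFree w := by
  simp only [sfB, List.all_eq_true, List.mem_tails, List.mem_inits,
    Bool.not_eq_true', Bool.not_eq_true]
  constructor
  · intro h x hx hinf
    obtain ⟨t, hpre, hsuf⟩ := List.infix_iff_prefix_suffix.mp hinf
    have := h t hsuf (x ++ x) hpre
    rw [(sqAt_iff (x ++ x)).mpr ⟨x, hx, rfl⟩] at this
    exact absurd this (by simp)
  · intro h t hsuf p hpre
    by_contra hc
    rw [Bool.not_eq_false] at hc
    obtain ⟨x, hx, rfl⟩ := (sqAt_iff p).mp hc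
    exact h x hx (List.infix_iff_prefix_suffix.mpr ⟨t, hpre, hsuf⟩)

/-- Boolean extremality check (given square-freeness). -/
def extB (w : List (Fin 3)) : Bool :=
  (List.range (w.length + 1)).all fun i =>
    [a, b, c].all fun x => !sfB (w.take i ++ x :: w.drop i)

lemma extB_spec (w : List (Fin 3)) (h : extB w = true) :
    ∀ (w' w'' : List (Fin 3)) (x : Fin 3), w = w' ++ w'' →
      ¬ SquareFree (w' ++ x :: w'') := by
  intro w' w'' x hw hs
  simp only [extB, List.all_eq_true, List.mem_range] at h
  have hi : w'.length < w.length + 1 := by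
    subst hw; simp
  have hmem : x ∈ [a, b, c] := by
    fin_cases x <;> simp [a, b, c]
  have := h w'.length hi x hmem
  rw [hw, List.take_left, List.drop_left] at this
  rw [← sfB_iff] at hs
  simp [hs] at this

/-- The word `H` is square-free and extremal. -/
theorem H_extremal : SquareFree H ∧ Extremal H := by
  have h1 : SquareFree H := (sfB_iff H).mp (by decide)
  have h2 : ∀ (w' w'' : List (Fin 3)) (x : Fin 3), H = w' ++ w'' →
      ¬ SquareFree (w' ++ x :: w'') := extB_spec H (by decide)
  exact ⟨h1, h1, h2⟩
end
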